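/- The full symmetry group of the pseudo-rhombicuboctahedron has order 16: the set of matrices A in O(3) satisfying A(V') = V' has exactly 16 elements. -/

import Mathlib

set_option synthInstance.maxSize 2000
set_option maxHeartbeats 2000000
open scoped Matrix

noncomputable def base : Fin 3 → ℝ := ![1, 1, 1 + Real.sqrt 2]

/-- The vertex set of the rhombicuboctahedron with edge length 2 centered at the origin:
all points whose coordinates are, in some order, `±1, ±1, ±(1 + √2)`
(all coordinate permutations combined with all choices of signs). -/
def V : Set (EuclideanSpace ℝ (Fin 3)) :=
  {v | ∃ σ : Equiv.Perm (Fin 3), ∃ ε : Fin 3 → ℝ,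
    (∀ i, ε i = 1 ∨ ε i = -1) ∧ ∀ i, v i = ε i * base (σ i)}

noncomputable def pt (a b c : ℝ) : EuclideanSpace ℝ (Fin 3) := WithLp.toLp 2 ![a, b, c]

/-- The four top-cupola vertices `(±1, ±1, 1 + √2)` of the rhombicuboctahedron
that get replaced. -/
noncomputable def Vtop : Set (EuclideanSpace ℝ (Fin 3)) :=
  {pt 1 1 (1 + Real.sqrt 2), pt 1 (-1) (1 + Real.sqrt 2),
   pt (-1) 1 (1 + Real.sqrt 2), pt (-1) (-1) (1 + Real.sqrt 2)}

/-- The four new top vertices `(±√2, 0, 1 + √2)` and `(0, ±√2, 1 + √2)`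
(the top square cupola rotated by 45° about the z-axis). -/
noncomputable def Vnew : Set (EuclideanSpace ℝ (Fin 3)) :=
  {pt (Real.sqrt 2) 0 (1 + Real.sqrt 2), pt (-Real.sqrt 2) 0 (1 + Real.sqrt 2),
   pt 0 (Real.sqrt 2) (1 + Real.sqrt 2), pt 0 (-Real.sqrt 2) (1 + Real.sqrt 2)}

/-- The vertex set of the pseudo-rhombicuboctahedron (elongated square gyrobicupola)
with edge length 2. -/
noncomputable def V' : Set (EuclideanSpace ℝ (Fin 3)) := (V \ Vtop) ∪ Vnew

/-- The action of a 3×3 real matrix on ℝ³ (as `EuclideanSpace ℝ (Fin 3)`). -/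
def act (A : Matrix (Fin 3) (Fin 3) ℝ) (v : EuclideanSpace ℝ (Fin 3)) :
    EuclideanSpace ℝ (Fin 3) := WithLp.toLp 2 (A.mulVec v)

/-! ### Auxiliary: exact arithmetic in `ℤ[√2]` -/

abbrev Q2 := ℤ × ℤ
abbrev P3 := Q2 × Q2 × Q2
abbrev M3 := P3 × P3 × P3

def qadd (x y : Q2) : Q2 := (x.1 + y.1, x.2 + y.2)
def qmul (x y : Q2) : Q2 := (x.1 * y.1 + 2 * (x.2 * y.2), x.1 * y.2 + x.2 * y.1)
def qneg (x : Q2) : Q2 := (-x.1, -x.2)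

def vneg (p : P3) : P3 := (qneg p.1, qneg p.2.1, qneg p.2.2)
def qdot (p q : P3) : Q2 :=
  qadd (qmul p.1 q.1) (qadd (qmul p.2.1 q.2.1) (qmul p.2.2 q.2.2))
def mv (m : M3) (p : P3) : P3 := (qdot m.1 p, qdot m.2.1 p, qdot m.2.2 p)
def mtr (m : M3) : M3 :=
  ((m.1.1, m.2.1.1, m.2.2.1), (m.1.2.1, m.2.1.2.1, m.2.2.2.1), (m.1.2.2, m.2.1.2.2, m.2.2.2.2))
def mmul (m n : M3) : M3 :=
  (mv m ((mtr n).1), mv m ((mtr n).2.1), mv m ((mtr n).2.2))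
def mid4 : M3 := (((4,0),(0,0),(0,0)), ((0,0),(4,0),(0,0)), ((0,0),(0,0),(4,0)))
def dbl (p : P3) : P3 := (qadd p.1 p.1, qadd p.2.1 p.2.1, qadd p.2.2 p.2.2)

noncomputable def toR (x : Q2) : ℝ := (x.1 : ℝ) + (x.2 : ℝ) * Real.sqrt 2

lemma toR_add (x y : Q2) : toR (qadd x y) = toR x + toR y := by
  simp [toR, qadd]; push_cast; ring

lemma toR_neg (x : Q2) : toR (qneg x) = -toR x := by simp [toR, qneg]; ring

lemma toR_mul (x y : Q2) : toR (qmul x y) = toR x * toR y := by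
  have h : Real.sqrt 2 ^ 2 = 2 := Real.sq_sqrt (by norm_num)
  simp only [toR, qmul]
  push_cast
  linear_combination (-(x.2 : ℝ) * (y.2 : ℝ)) * h

lemma toR_inj : Function.Injective toR := by
  rintro ⟨a, b⟩ ⟨c, d⟩ h
  simp only [toR] at h
  by_cases hbd : b = d
  · subst hbd
    have : (a : ℝ) = c := by linarith
    have : a = c := by exact_mod_cast this
    simp [this]
  · exfalso
    have hbd2 : (d : ℝ) - b ≠ 0 := by
      intro h0
      have : (d : ℝ) = b := by linarith
      exact hbd ((show d = b by exact_mod_cast this)).symm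
    have hs : Real.sqrt 2 = ((a - c : ℤ) / (d - b : ℤ) : ℚ) := by
      push_cast
      field_simp
      linarith [h]
    exact irrational_sqrt_two ⟨_, hs.symm⟩

noncomputable def toE (p : P3) : EuclideanSpace ℝ (Fin 3) := WithLp.toLp 2 ![toR p.1, toR p.2.1, toR p.2.2]

lemma toE_inj : Function.Injective toE := by
  rintro ⟨a1, a2, a3⟩ ⟨b1, b2, b3⟩ h
  have h0 := congrFun (congrArg WithLp.ofLp h) 0
  have h1 := congrFun (congrArg WithLp.ofLp h) 1
  have h2 := congrFun (congrArg WithLp.ofLp h) 2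
  simp only [toE, Matrix.cons_val_zero, Matrix.cons_val_one, Matrix.head_cons,
    Matrix.cons_val_two, Matrix.tail_cons] at h0 h1 h2
  exact Prod.ext (toR_inj h0) (Prod.ext (toR_inj h1) (toR_inj h2))

lemma toE_vneg (p : P3) : toE (vneg p) = -toE p := by
  ext i; fin_cases i <;> simp [toE, vneg, toR_neg]

def c1 : Q2 := (1,0)
def cm1 : Q2 := (-1,0)
def ct : Q2 := (1,1)
def cmt : Q2 := (-1,-1)
def cs : Q2 := (0,1)
def cms : Q2 := (0,-1)
def c0 : Q2 := (0,0)

def L24V : List P3 :=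
  [(ct,c1,c1), (ct,c1,cm1), (ct,cm1,c1), (ct,cm1,cm1),
   (cmt,c1,c1), (cmt,c1,cm1), (cmt,cm1,c1), (cmt,cm1,cm1),
   (c1,ct,c1), (c1,ct,cm1), (cm1,ct,c1), (cm1,ct,cm1),
   (c1,cmt,c1), (c1,cmt,cm1), (cm1,cmt,c1), (cm1,cmt,cm1),
   (c1,c1,ct), (c1,cm1,ct), (cm1,c1,ct), (cm1,cm1,ct),
   (c1,c1,cmt), (c1,cm1,cmt), (cm1,c1,cmt), (cm1,cm1,cmt)]

def Ltop : List P3 := [(c1,c1,ct), (c1,cm1,ct), (cm1,c1,ct), (cm1,cm1,ct)]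

def Lnew : List P3 := [(cs,c0,ct), (cms,c0,ct), (c0,cs,ct), (c0,cms,ct)]

def Lbot : List P3 := [(c1,c1,cmt), (c1,cm1,cmt), (cm1,c1,cmt), (cm1,cm1,cmt)]

def L24 : List P3 :=
  [(ct,c1,c1), (ct,c1,cm1), (ct,cm1,c1), (ct,cm1,cm1),
   (cmt,c1,c1), (cmt,c1,cm1), (cmt,cm1,c1), (cmt,cm1,cm1),
   (c1,ct,c1), (c1,ct,cm1), (cm1,ct,c1), (cm1,ct,cm1),
   (c1,cmt,c1), (c1,cmt,cm1), (cm1,cmt,c1), (cm1,cmt,cm1),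
   (c1,c1,cmt), (c1,cm1,cmt), (cm1,c1,cmt), (cm1,cm1,cmt),
   (cs,c0,ct), (cms,c0,ct), (c0,cs,ct), (c0,cms,ct)]

def Cup8 : List P3 :=
  [(cs,c0,ct), (cms,c0,ct), (c0,cs,ct), (c0,cms,ct),
   (c1,c1,cmt), (c1,cm1,cmt), (cm1,c1,cmt), (cm1,cm1,cmt)]

/-! ### `V` as the image of an explicit list -/

def qbase : Fin 3 → Q2 := ![c1, c1, ct]

def qsgn (b : Bool) (x : Q2) : Q2 := cond b x (qneg x)

def wOf (σ : Equiv.Perm (Fin 3)) (sg : Fin 3 → Bool) : P3 :=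
  (qsgn (sg 0) (qbase (σ 0)), qsgn (sg 1) (qbase (σ 1)), qsgn (sg 2) (qbase (σ 2)))

lemma wOf_mem : ∀ (σ : Equiv.Perm (Fin 3)) (sg : Fin 3 → Bool), wOf σ sg ∈ L24V := by decide

lemma wOf_surj : ∀ p ∈ L24V, ∃ σ, ∃ sg, wOf σ sg = p := by decide

lemma toR_qbase (j : Fin 3) : toR (qbase j) = base j := by
  fin_cases j <;> simp [toR, qbase, base, c1, ct]

lemma qsgn_toR (b : Bool) (x : Q2) : toR (qsgn b x) = (cond b (1:ℝ) (-1)) * toR x := by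
  cases b <;> simp [qsgn, toR_neg]

lemma toE_wOf_coord (σ : Equiv.Perm (Fin 3)) (sg : Fin 3 → Bool) (i : Fin 3) :
    toE (wOf σ sg) i = (cond (sg i) (1:ℝ) (-1)) * base (σ i) := by
  fin_cases i <;> simp [toE, wOf, qsgn_toR, toR_qbase]

lemma V_eq : V = toE '' {p | p ∈ L24V} := by
  ext v
  constructor
  · rintro ⟨σ, ε, hε, hv⟩
    classical
    refine ⟨wOf σ (fun i => if ε i = 1 then true else false), wOf_mem _ _, ?_⟩
    ext i
    rw [toE_wOf_coord, hv i]
    rcases hε i with h | h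
    · simp [h]
    · rw [if_neg (by rw [h]; norm_num)]
      simp [h]
  · rintro ⟨p, hp, rfl⟩
    obtain ⟨σ, sg, rfl⟩ := wOf_surj p hp
    exact ⟨σ, fun i => cond (sg i) 1 (-1),
      fun i => by rcases h : sg i <;> simp [h], fun i => toE_wOf_coord σ sg i⟩

lemma ptT1 : pt 1 1 (1 + Real.sqrt 2) = toE (c1,c1,ct) := by
  ext i; fin_cases i <;> simp [pt, toE, toR, c1, ct]
lemma ptT2 : pt 1 (-1) (1 + Real.sqrt 2) = toE (c1,cm1,ct) := by
  ext i; fin_cases i <;> simp [pt, toE, toR, c1, cm1, ct]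
lemma ptT3 : pt (-1) 1 (1 + Real.sqrt 2) = toE (cm1,c1,ct) := by
  ext i; fin_cases i <;> simp [pt, toE, toR, c1, cm1, ct]
lemma ptT4 : pt (-1) (-1) (1 + Real.sqrt 2) = toE (cm1,cm1,ct) := by
  ext i; fin_cases i <;> simp [pt, toE, toR, cm1, ct]
lemma ptN1 : pt (Real.sqrt 2) 0 (1 + Real.sqrt 2) = toE (cs,c0,ct) := by
  ext i; fin_cases i <;> simp [pt, toE, toR, cs, c0, ct]
lemma ptN2 : pt (-Real.sqrt 2) 0 (1 + Real.sqrt 2) = toE (cms,c0,ct) := by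
  ext i; fin_cases i <;> simp [pt, toE, toR, cms, c0, ct]
lemma ptN3 : pt 0 (Real.sqrt 2) (1 + Real.sqrt 2) = toE (c0,cs,ct) := by
  ext i; fin_cases i <;> simp [pt, toE, toR, cs, c0, ct]
lemma ptN4 : pt 0 (-Real.sqrt 2) (1 + Real.sqrt 2) = toE (c0,cms,ct) := by
  ext i; fin_cases i <;> simp [pt, toE, toR, cms, c0, ct]

lemma Vtop_eq : Vtop = toE '' {p | p ∈ Ltop} := by
  have h : {p : P3 | p ∈ Ltop} = {(c1,c1,ct), (c1,cm1,ct), (cm1,c1,ct), (cm1,cm1,ct)} := by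
    ext p; simp [Ltop]
  rw [h]
  simp only [Set.image_insert_eq, Set.image_singleton]
  rw [Vtop, ptT1, ptT2, ptT3, ptT4]

lemma Vnew_eq : Vnew = toE '' {p | p ∈ Lnew} := by
  have h : {p : P3 | p ∈ Lnew} = {(cs,c0,ct), (cms,c0,ct), (c0,cs,ct), (c0,cms,ct)} := by
    ext p; simp [Lnew]
  rw [h]
  simp only [Set.image_insert_eq, Set.image_singleton]
  rw [Vnew, ptN1, ptN2, ptN3, ptN4]

lemma lsets1 : ∀ p ∈ L24V, p ∉ Ltop → p ∈ L24 := by decide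
lemma lsets2 : ∀ p ∈ Lnew, p ∈ L24 := by decide
lemma lsets3 : ∀ p ∈ L24, (p ∈ L24V ∧ p ∉ Ltop) ∨ p ∈ Lnew := by decide

lemma V'_eq : V' = toE '' {p | p ∈ L24} := by
  rw [V', V_eq, Vtop_eq, Vnew_eq, ← Set.image_diff toE_inj, ← Set.image_union]
  have h : ({p | p ∈ L24V} \ {p | p ∈ Ltop} ∪ {p | p ∈ Lnew} : Set P3) = {p | p ∈ L24} := by
    ext p
    constructor
    · rintro (⟨h1, h2⟩ | h)
      · exact lsets1 p h1 h2
      · exact lsets2 p h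
    · intro h
      rcases lsets3 p h with ⟨h1, h2⟩ | h2
      · exact Or.inl ⟨h1, h2⟩
      · exact Or.inr h2
  rw [h]

/-! ### The sixteen symmetries (stored with doubled entries) -/

def d1 : Q2 := (2,0)
def dm1 : Q2 := (-2,0)
def ds : Q2 := (0,1)
def dms : Q2 := (0,-1)

def E16 : List M3 :=
  [((d1,c0,c0),(c0,d1,c0),(c0,c0,d1)),
   ((d1,c0,c0),(c0,dm1,c0),(c0,c0,d1)),
   ((dm1,c0,c0),(c0,d1,c0),(c0,c0,d1)),
   ((dm1,c0,c0),(c0,dm1,c0),(c0,c0,d1)),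
   ((c0,d1,c0),(d1,c0,c0),(c0,c0,d1)),
   ((c0,dm1,c0),(d1,c0,c0),(c0,c0,d1)),
   ((c0,d1,c0),(dm1,c0,c0),(c0,c0,d1)),
   ((c0,dm1,c0),(dm1,c0,c0),(c0,c0,d1)),
   ((ds,dms,c0),(ds,ds,c0),(c0,c0,dm1)),
   ((ds,ds,c0),(ds,dms,c0),(c0,c0,dm1)),
   ((ds,ds,c0),(dms,ds,c0),(c0,c0,dm1)),
   ((ds,dms,c0),(dms,dms,c0),(c0,c0,dm1)),
   ((dms,dms,c0),(ds,dms,c0),(c0,c0,dm1)),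
   ((dms,ds,c0),(ds,ds,c0),(c0,c0,dm1)),
   ((dms,dms,c0),(dms,ds,c0),(c0,c0,dm1)),
   ((dms,ds,c0),(dms,dms,c0),(c0,c0,dm1))]

lemma e16_orth : ∀ m ∈ E16, mmul m (mtr m) = mid4 := by decide
lemma e16_maps : ∀ m ∈ E16, ∀ p ∈ L24,
    (∃ q ∈ L24, mv m p = dbl q) ∧ (∃ q ∈ L24, mv (mtr m) p = dbl q) := by decide
lemma e16_nodup : E16.Nodup := by decide

/-- The real matrix represented by `m` (entries are half the stored values). -/
noncomputable def toMatH (m : M3) : Matrix (Fin 3) (Fin 3) ℝ :=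
  Matrix.of ![![toR m.1.1 / 2, toR m.1.2.1 / 2, toR m.1.2.2 / 2],
    ![toR m.2.1.1 / 2, toR m.2.1.2.1 / 2, toR m.2.1.2.2 / 2],
    ![toR m.2.2.1 / 2, toR m.2.2.2.1 / 2, toR m.2.2.2.2 / 2]]

lemma toMatH_half (x y : Q2) (h : toR x / 2 = toR y / 2) : x = y :=
  toR_inj (by linarith)

lemma toMatH_inj : Function.Injective toMatH := by
  rintro ⟨⟨a1,a2,a3⟩,⟨b1,b2,b3⟩,⟨g1,g2,g3⟩⟩ ⟨⟨a1',a2',a3'⟩,⟨b1',b2',b3'⟩,⟨g1',g2',g3'⟩⟩ h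
  have e : ∀ i j, toMatH ((a1,a2,a3),(b1,b2,b3),(g1,g2,g3)) i j
      = toMatH ((a1',a2',a3'),(b1',b2',b3'),(g1',g2',g3')) i j := fun i j =>
    congrFun (congrFun h i) j
  have h00 : a1 = a1' := toMatH_half _ _ (e 0 0)
  have h01 : a2 = a2' := toMatH_half _ _ (e 0 1)
  have h02 : a3 = a3' := toMatH_half _ _ (e 0 2)
  have h10 : b1 = b1' := toMatH_half _ _ (e 1 0)
  have h11 : b2 = b2' := toMatH_half _ _ (e 1 1)
  have h12 : b3 = b3' := toMatH_half _ _ (e 1 2)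
  have h20 : g1 = g1' := toMatH_half _ _ (e 2 0)
  have h21 : g2 = g2' := toMatH_half _ _ (e 2 1)
  have h22 : g3 = g3' := toMatH_half _ _ (e 2 2)
  subst h00 h01 h02 h10 h11 h12 h20 h21 h22
  rfl

lemma toR_qdot (p q : P3) : toR (qdot p q)
    = toR p.1 * toR q.1 + toR p.2.1 * toR q.2.1 + toR p.2.2 * toR q.2.2 := by
  simp [qdot, toR_add, toR_mul]; ring

/-- Bridge: if `m · p = 2q` in exact arithmetic then the real matrix maps `toE p` to `toE q`. -/
lemma mulVec_bridge {m : M3} {p q : P3} (h : mv m p = dbl q) :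
    (toMatH m).mulVec (toE p) = toE q := by
  have h1 := congrArg (fun x => toR x.1) h
  have h2 := congrArg (fun x => toR x.2.1) h
  have h3 := congrArg (fun x => toR x.2.2) h
  simp only [mv, dbl, toR_qdot, toR_add] at h1 h2 h3
  funext i
  fin_cases i <;>
    simp [Matrix.mulVec, dotProduct, Fin.sum_univ_three, toMatH, toE] <;> linarith

lemma toMatH_mtr (m : M3) : toMatH (mtr m) = (toMatH m)ᵀ := by
  funext i j
  fin_cases i <;> fin_cases j <;> simp [toMatH, mtr, Matrix.transpose_apply]

lemma toR4 : toR (4,0) = 4 := by simp [toR]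
lemma toR0 : toR (0,0) = 0 := by simp [toR]

/-- Bridge for products: `m · n = 4·id` gives `toMatH m * toMatH n = 1`. -/
lemma mul_bridge {m n : M3} (h : mmul m n = mid4) : toMatH m * toMatH n = 1 := by
  have e : ∀ (f : M3 → Q2), toR (f (mmul m n)) = toR (f mid4) := fun f => congrArg (toR ∘ f) h
  have h11 := e (fun x => x.1.1); have h12 := e (fun x => x.1.2.1); have h13 := e (fun x => x.1.2.2)
  have h21 := e (fun x => x.2.1.1); have h22 := e (fun x => x.2.1.2.1)
  have h23 := e (fun x => x.2.1.2.2)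
  have h31 := e (fun x => x.2.2.1); have h32 := e (fun x => x.2.2.2.1)
  have h33 := e (fun x => x.2.2.2.2)
  simp only [mmul, mv, mtr, mid4, toR_qdot, toR4, toR0] at h11 h12 h13 h21 h22 h23 h31 h32 h33
  funext i j
  fin_cases i <;> fin_cases j <;>
    simp [Matrix.mul_apply, Fin.sum_univ_three, toMatH, Matrix.one_apply] <;> linarith

lemma star_eq_transpose (A : Matrix (Fin 3) (Fin 3) ℝ) : star A = Aᵀ := by
  rw [Matrix.star_eq_conjTranspose, Matrix.conjTranspose_eq_transpose_of_trivial]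

/-! ### Part A: each of the sixteen matrices is a symmetry -/

lemma partA : ∀ m ∈ E16, toMatH m ∈ Matrix.orthogonalGroup (Fin 3) ℝ ∧
    act (toMatH m) '' V' = V' := by
  intro m hm
  have horth' : toMatH m * toMatH (mtr m) = 1 := mul_bridge (e16_orth m hm)
  have horth : toMatH m * (toMatH m)ᵀ = 1 := by rw [← toMatH_mtr]; exact horth'
  have hmem : toMatH m ∈ Matrix.orthogonalGroup (Fin 3) ℝ := by
    rw [Matrix.mem_orthogonalGroup_iff]; exact horth
  refine ⟨hmem, ?_⟩
  rw [V'_eq]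
  ext v
  constructor
  · rintro ⟨_, ⟨p, hp, rfl⟩, rfl⟩
    obtain ⟨q, hq, hmv⟩ := (e16_maps m hm p hp).1
    exact ⟨q, hq, (congrArg (WithLp.toLp 2) (mulVec_bridge hmv)).symm⟩
  · rintro ⟨q, hq, rfl⟩
    obtain ⟨r, hr, hmv⟩ := (e16_maps m hm q hq).2
    have hb : (toMatH (mtr m)).mulVec (toE q) = toE r := mulVec_bridge hmv
    refine ⟨toE r, ⟨r, hr, rfl⟩, ?_⟩
    show WithLp.toLp 2 ((toMatH m).mulVec (toE r)) = toE q
    rw [← hb, Matrix.mulVec_mulVec, horth', Matrix.one_mulVec]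

/-! ### Part B: every symmetry is one of the sixteen matrices -/

lemma o2 {a b c d : ℝ} (ha : a^2 + b^2 = 1) (hb : a*c + b*d = 0) (hc : c^2 + d^2 = 1) :
    (c = -b ∧ d = a) ∨ (c = b ∧ d = -a) := by
  have hu2 : (a*d - b*c)^2 = 1 := by
    linear_combination (c^2 + d^2) * ha + hc - (a*c + b*d) * hb
  have hd : d = a*(a*d - b*c) := by linear_combination (-d)*ha + b*hb
  have hcc : c = -(b*(a*d - b*c)) := by linear_combination (-c)*ha + a*hb
  have hfac : (a*d - b*c - 1) * (a*d - b*c + 1) = 0 := by linear_combination hu2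
  rcases mul_eq_zero.mp hfac with h | h
  · have h1 : a*d - b*c = 1 := by linarith
    left
    refine ⟨?_, ?_⟩
    · rw [hcc, h1]; ring
    · rw [hd, h1]; ring
  · have h1 : a*d - b*c = -1 := by linarith
    right
    refine ⟨?_, ?_⟩
    · rw [hcc, h1]; ring
    · rw [hd, h1]; ring

lemma master {A : Matrix (Fin 3) (Fin 3) ℝ} (hAtA : Aᵀ * A = 1) (hAAt : A * Aᵀ = 1)
    {a b η : ℝ}
    (h00 : A 0 0 = a) (h10 : A 1 0 = b) (h20 : A 2 0 = 0)
    (h02 : A 0 2 = 0) (h12 : A 1 2 = 0) (h22 : A 2 2 = η)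
    (hab : a^2 + b^2 = 1) (hη : η^2 = 1) :
    A = Matrix.of ![![a,-b,0],![b,a,0],![0,0,η]] ∨
    A = Matrix.of ![![a,b,0],![b,-a,0],![0,0,η]] := by
  have eAt : ∀ j k : Fin 3, A 0 j * A 0 k + A 1 j * A 1 k + A 2 j * A 2 k
      = if j = k then 1 else 0 := by
    intro j k
    have h := congrFun (congrFun hAtA j) k
    simpa [Matrix.mul_apply, Fin.sum_univ_three, Matrix.transpose_apply,
      Matrix.one_apply] using h
  have eA : ∀ j k : Fin 3, A j 0 * A k 0 + A j 1 * A k 1 + A j 2 * A k 2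
      = if j = k then 1 else 0 := by
    intro j k
    have h := congrFun (congrFun hAAt j) k
    simpa [Matrix.mul_apply, Fin.sum_univ_three, Matrix.transpose_apply,
      Matrix.one_apply] using h
  have h21 : A 2 1 = 0 := by
    have h := eA 2 2
    simp only [Fin.reduceEq, reduceIte] at h
    have h2 : A 2 1 ^ 2 = 0 := by rw [h20, h22] at h; nlinarith [h, hη]
    exact pow_eq_zero_iff (n := 2) (by norm_num) |>.mp h2
  have hcol01 : a * A 0 1 + b * A 1 1 = 0 := by
    have h := eAt 0 1
    simp only [Fin.reduceEq, reduceIte] at h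
    rw [h00, h10, h20] at h
    linarith
  have hcol1 : (A 0 1)^2 + (A 1 1)^2 = 1 := by
    have h := eAt 1 1
    simp only [Fin.reduceEq, reduceIte] at h
    rw [h21] at h
    nlinarith [h]
  rcases o2 hab hcol01 hcol1 with ⟨hc, hd⟩ | ⟨hc, hd⟩
  · left
    funext i j
    fin_cases i <;> fin_cases j <;>
      simp [h00, h10, h20, h02, h12, h22, h21, hc, hd]
  · right
    funext i j
    fin_cases i <;> fin_cases j <;>
      simp [h00, h10, h20, h02, h12, h22, h21, hc, hd]

section Upper

variable {A : Matrix (Fin 3) (Fin 3) ℝ}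

lemma dot_pres (hAtA : Aᵀ * A = 1) (x y : Fin 3 → ℝ) :
    (A.mulVec x 0) * (A.mulVec y 0) + (A.mulVec x 1) * (A.mulVec y 1)
      + (A.mulVec x 2) * (A.mulVec y 2) = x 0 * y 0 + x 1 * y 1 + x 2 * y 2 := by
  have e : ∀ j k : Fin 3, A 0 j * A 0 k + A 1 j * A 1 k + A 2 j * A 2 k
      = if j = k then 1 else 0 := by
    intro j k
    have h := congrFun (congrFun hAtA j) k
    simpa [Matrix.mul_apply, Fin.sum_univ_three, Matrix.transpose_apply,
      Matrix.one_apply] using h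
  have e00 := e 0 0; have e01 := e 0 1; have e02 := e 0 2
  have e10 := e 1 0; have e11 := e 1 1; have e12 := e 1 2
  have e20 := e 2 0; have e21 := e 2 1; have e22 := e 2 2
  simp only [Fin.reduceEq, if_true, if_false, reduceIte] at e00 e01 e02 e10 e11 e12 e20 e21 e22
  simp only [Matrix.mulVec, dotProduct, Fin.sum_univ_three]
  linear_combination (x 0 * y 0) * e00 + (x 0 * y 1) * e01 + (x 0 * y 2) * e02 +
    (x 1 * y 0) * e10 + (x 1 * y 1) * e11 + (x 1 * y 2) * e12 +
    (x 2 * y 0) * e20 + (x 2 * y 1) * e21 + (x 2 * y 2) * e22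

lemma toE_dot (p q : P3) :
    (toE p 0) * (toE q 0) + (toE p 1) * (toE q 1) + (toE p 2) * (toE q 2)
      = toR (qdot p q) := by
  simp [toE, toR_qdot]

lemma cup_or : ∀ q ∈ L24, q ∈ Cup8 ∨ vneg q ∈ L24 := by decide

end Upper

/-! ### Main theorem -/


def opp (w : P3) : P3 := (qneg w.1, qneg w.2.1, w.2.2)
def p1c : P3 := (cs, c0, ct)
def p3c : P3 := (cms, c0, ct)

lemma sqrt2_pos : (0:ℝ) < Real.sqrt 2 := Real.sqrt_pos.mpr (by norm_num)
lemma sqrt2_sq : Real.sqrt 2 ^ 2 = 2 := Real.sq_sqrt (by norm_num)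
lemma one_add_sqrt2_pos : (0:ℝ) < 1 + Real.sqrt 2 := by linarith [sqrt2_pos]
lemma half_sqrt2 : Real.sqrt 2 / 2 * Real.sqrt 2 = 1 := by
  linear_combination (1/2) * sqrt2_sq

lemma cancel_s {x v : ℝ} (h : x * Real.sqrt 2 = v * Real.sqrt 2) : x = v :=
  mul_right_cancel₀ (ne_of_gt sqrt2_pos) h

lemma zero_of_mul_pos {x c : ℝ} (hc : 0 < c) (h : x * c = 0) : x = 0 := by
  rcases mul_eq_zero.mp h with h | h
  · exact h
  · exact absurd h (ne_of_gt hc)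

lemma finalPos {A : Matrix (Fin 3) (Fin 3) ℝ} (hAtA : Aᵀ * A = 1) (hAAt : A * Aᵀ = 1)
    (w w' : P3) (hw : w ∈ Lnew) (hw' : w' = opp w)
    (hA1 : A.mulVec (toE p1c) = toE w) (hA3 : A.mulVec (toE p3c) = toE w') :
    A ∈ toMatH '' {m | m ∈ E16} := by
  subst hw'
  fin_cases hw
  · have e10 := congrFun hA1 0
    have e11 := congrFun hA1 1
    have e12 := congrFun hA1 2
    have e30 := congrFun hA3 0
    have e31 := congrFun hA3 1
    have e32 := congrFun hA3 2
    simp [Matrix.mulVec, dotProduct, Fin.sum_univ_three, toE, toR, p1c, p3c, opp,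
      qneg, cs, cms, c0, ct, cmt, c1, cm1] at e10 e11 e12 e30 e31 e32
    have h02 : A 0 2 = 0 := zero_of_mul_pos one_add_sqrt2_pos (by linarith)
    have h02s : A 0 2 * Real.sqrt 2 = 0 := by rw [h02]; ring
    have h12 : A 1 2 = 0 := zero_of_mul_pos one_add_sqrt2_pos (by linarith)
    have h12s : A 1 2 * Real.sqrt 2 = 0 := by rw [h12]; ring
    have h22 : A 2 2 = 1 := by
      have h := zero_of_mul_pos one_add_sqrt2_pos
        (show (A 2 2 - 1) * (1 + Real.sqrt 2) = 0 by linarith)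
      linarith
    have h22s : A 2 2 * Real.sqrt 2 = Real.sqrt 2 := by rw [h22]; ring
    have h20 : A 2 0 = 0 := zero_of_mul_pos sqrt2_pos (by linarith)
    have h00 : A 0 0 = 1 := cancel_s (by linarith)
    have h10 : A 1 0 = 0 := zero_of_mul_pos sqrt2_pos (by linarith)
    rcases master hAtA hAAt h00 h10 h20 h02 h12 h22 (by norm_num : (1:ℝ)^2 + (0:ℝ)^2 = 1) (by norm_num : (1:ℝ)^2 = 1) with hA | hA
    · exact ⟨((d1,c0,c0),(c0,d1,c0),(c0,c0,d1)), by decide, by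
        rw [hA]; funext i j; fin_cases i <;> fin_cases j <;>
          simp [toMatH, toR, d1, dm1, ds, dms, c0] <;> ring_nf <;> norm_num⟩
    · exact ⟨((d1,c0,c0),(c0,dm1,c0),(c0,c0,d1)), by decide, by
        rw [hA]; funext i j; fin_cases i <;> fin_cases j <;>
          simp [toMatH, toR, d1, dm1, ds, dms, c0] <;> ring_nf <;> norm_num⟩
  · have e10 := congrFun hA1 0
    have e11 := congrFun hA1 1
    have e12 := congrFun hA1 2
    have e30 := congrFun hA3 0
    have e31 := congrFun hA3 1
    have e32 := congrFun hA3 2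
    simp [Matrix.mulVec, dotProduct, Fin.sum_univ_three, toE, toR, p1c, p3c, opp,
      qneg, cs, cms, c0, ct, cmt, c1, cm1] at e10 e11 e12 e30 e31 e32
    have h02 : A 0 2 = 0 := zero_of_mul_pos one_add_sqrt2_pos (by linarith)
    have h02s : A 0 2 * Real.sqrt 2 = 0 := by rw [h02]; ring
    have h12 : A 1 2 = 0 := zero_of_mul_pos one_add_sqrt2_pos (by linarith)
    have h12s : A 1 2 * Real.sqrt 2 = 0 := by rw [h12]; ring
    have h22 : A 2 2 = 1 := by
      have h := zero_of_mul_pos one_add_sqrt2_pos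
        (show (A 2 2 - 1) * (1 + Real.sqrt 2) = 0 by linarith)
      linarith
    have h22s : A 2 2 * Real.sqrt 2 = Real.sqrt 2 := by rw [h22]; ring
    have h20 : A 2 0 = 0 := zero_of_mul_pos sqrt2_pos (by linarith)
    have h00 : A 0 0 = -1 := cancel_s (by linarith)
    have h10 : A 1 0 = 0 := zero_of_mul_pos sqrt2_pos (by linarith)
    rcases master hAtA hAAt h00 h10 h20 h02 h12 h22 (by norm_num : ((-1:ℝ))^2 + (0:ℝ)^2 = 1) (by norm_num : (1:ℝ)^2 = 1) with hA | hA
    · exact ⟨((dm1,c0,c0),(c0,dm1,c0),(c0,c0,d1)), by decide, by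
        rw [hA]; funext i j; fin_cases i <;> fin_cases j <;>
          simp [toMatH, toR, d1, dm1, ds, dms, c0] <;> ring_nf <;> norm_num⟩
    · exact ⟨((dm1,c0,c0),(c0,d1,c0),(c0,c0,d1)), by decide, by
        rw [hA]; funext i j; fin_cases i <;> fin_cases j <;>
          simp [toMatH, toR, d1, dm1, ds, dms, c0] <;> ring_nf <;> norm_num⟩
  · have e10 := congrFun hA1 0
    have e11 := congrFun hA1 1
    have e12 := congrFun hA1 2
    have e30 := congrFun hA3 0
    have e31 := congrFun hA3 1
    have e32 := congrFun hA3 2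
    simp [Matrix.mulVec, dotProduct, Fin.sum_univ_three, toE, toR, p1c, p3c, opp,
      qneg, cs, cms, c0, ct, cmt, c1, cm1] at e10 e11 e12 e30 e31 e32
    have h02 : A 0 2 = 0 := zero_of_mul_pos one_add_sqrt2_pos (by linarith)
    have h02s : A 0 2 * Real.sqrt 2 = 0 := by rw [h02]; ring
    have h12 : A 1 2 = 0 := zero_of_mul_pos one_add_sqrt2_pos (by linarith)
    have h12s : A 1 2 * Real.sqrt 2 = 0 := by rw [h12]; ring
    have h22 : A 2 2 = 1 := by
      have h := zero_of_mul_pos one_add_sqrt2_pos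
        (show (A 2 2 - 1) * (1 + Real.sqrt 2) = 0 by linarith)
      linarith
    have h22s : A 2 2 * Real.sqrt 2 = Real.sqrt 2 := by rw [h22]; ring
    have h20 : A 2 0 = 0 := zero_of_mul_pos sqrt2_pos (by linarith)
    have h00 : A 0 0 = 0 := zero_of_mul_pos sqrt2_pos (by linarith)
    have h10 : A 1 0 = 1 := cancel_s (by linarith)
    rcases master hAtA hAAt h00 h10 h20 h02 h12 h22 (by norm_num : (0:ℝ)^2 + (1:ℝ)^2 = 1) (by norm_num : (1:ℝ)^2 = 1) with hA | hA
    · exact ⟨((c0,dm1,c0),(d1,c0,c0),(c0,c0,d1)), by decide, by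
        rw [hA]; funext i j; fin_cases i <;> fin_cases j <;>
          simp [toMatH, toR, d1, dm1, ds, dms, c0] <;> ring_nf <;> norm_num⟩
    · exact ⟨((c0,d1,c0),(d1,c0,c0),(c0,c0,d1)), by decide, by
        rw [hA]; funext i j; fin_cases i <;> fin_cases j <;>
          simp [toMatH, toR, d1, dm1, ds, dms, c0] <;> ring_nf <;> norm_num⟩
  · have e10 := congrFun hA1 0
    have e11 := congrFun hA1 1
    have e12 := congrFun hA1 2
    have e30 := congrFun hA3 0
    have e31 := congrFun hA3 1
    have e32 := congrFun hA3 2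
    simp [Matrix.mulVec, dotProduct, Fin.sum_univ_three, toE, toR, p1c, p3c, opp,
      qneg, cs, cms, c0, ct, cmt, c1, cm1] at e10 e11 e12 e30 e31 e32
    have h02 : A 0 2 = 0 := zero_of_mul_pos one_add_sqrt2_pos (by linarith)
    have h02s : A 0 2 * Real.sqrt 2 = 0 := by rw [h02]; ring
    have h12 : A 1 2 = 0 := zero_of_mul_pos one_add_sqrt2_pos (by linarith)
    have h12s : A 1 2 * Real.sqrt 2 = 0 := by rw [h12]; ring
    have h22 : A 2 2 = 1 := by
      have h := zero_of_mul_pos one_add_sqrt2_pos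
        (show (A 2 2 - 1) * (1 + Real.sqrt 2) = 0 by linarith)
      linarith
    have h22s : A 2 2 * Real.sqrt 2 = Real.sqrt 2 := by rw [h22]; ring
    have h20 : A 2 0 = 0 := zero_of_mul_pos sqrt2_pos (by linarith)
    have h00 : A 0 0 = 0 := zero_of_mul_pos sqrt2_pos (by linarith)
    have h10 : A 1 0 = -1 := cancel_s (by linarith)
    rcases master hAtA hAAt h00 h10 h20 h02 h12 h22 (by norm_num : (0:ℝ)^2 + ((-1:ℝ))^2 = 1) (by norm_num : (1:ℝ)^2 = 1) with hA | hA
    · exact ⟨((c0,d1,c0),(dm1,c0,c0),(c0,c0,d1)), by decide, by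
        rw [hA]; funext i j; fin_cases i <;> fin_cases j <;>
          simp [toMatH, toR, d1, dm1, ds, dms, c0] <;> ring_nf <;> norm_num⟩
    · exact ⟨((c0,dm1,c0),(dm1,c0,c0),(c0,c0,d1)), by decide, by
        rw [hA]; funext i j; fin_cases i <;> fin_cases j <;>
          simp [toMatH, toR, d1, dm1, ds, dms, c0] <;> ring_nf <;> norm_num⟩

lemma finalNeg {A : Matrix (Fin 3) (Fin 3) ℝ} (hAtA : Aᵀ * A = 1) (hAAt : A * Aᵀ = 1)
    (w w' : P3) (hw : w ∈ Lbot) (hw' : w' = opp w)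
    (hA1 : A.mulVec (toE p1c) = toE w) (hA3 : A.mulVec (toE p3c) = toE w') :
    A ∈ toMatH '' {m | m ∈ E16} := by
  subst hw'
  fin_cases hw
  · have e10 := congrFun hA1 0
    have e11 := congrFun hA1 1
    have e12 := congrFun hA1 2
    have e30 := congrFun hA3 0
    have e31 := congrFun hA3 1
    have e32 := congrFun hA3 2
    simp [Matrix.mulVec, dotProduct, Fin.sum_univ_three, toE, toR, p1c, p3c, opp,
      qneg, cs, cms, c0, ct, cmt, c1, cm1] at e10 e11 e12 e30 e31 e32
    have h02 : A 0 2 = 0 := zero_of_mul_pos one_add_sqrt2_pos (by linarith)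
    have h02s : A 0 2 * Real.sqrt 2 = 0 := by rw [h02]; ring
    have h12 : A 1 2 = 0 := zero_of_mul_pos one_add_sqrt2_pos (by linarith)
    have h12s : A 1 2 * Real.sqrt 2 = 0 := by rw [h12]; ring
    have h22 : A 2 2 = -1 := by
      have h := zero_of_mul_pos one_add_sqrt2_pos
        (show (A 2 2 + 1) * (1 + Real.sqrt 2) = 0 by linarith)
      linarith
    have h22s : A 2 2 * Real.sqrt 2 = -Real.sqrt 2 := by rw [h22]; ring
    have h20 : A 2 0 = 0 := zero_of_mul_pos sqrt2_pos (by linarith)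
    have h00 : A 0 0 = Real.sqrt 2 / 2 := cancel_s (by linarith [half_sqrt2])
    have h10 : A 1 0 = Real.sqrt 2 / 2 := cancel_s (by linarith [half_sqrt2])
    rcases master hAtA hAAt h00 h10 h20 h02 h12 h22 (by nlinarith [sqrt2_sq] : (Real.sqrt 2 / 2)^2 + (Real.sqrt 2 / 2)^2 = 1) (by norm_num : ((-1:ℝ))^2 = 1) with hA | hA
    · exact ⟨((ds,dms,c0),(ds,ds,c0),(c0,c0,dm1)), by decide, by
        rw [hA]; funext i j; fin_cases i <;> fin_cases j <;>
          simp [toMatH, toR, d1, dm1, ds, dms, c0] <;> ring_nf <;> norm_num⟩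
    · exact ⟨((ds,ds,c0),(ds,dms,c0),(c0,c0,dm1)), by decide, by
        rw [hA]; funext i j; fin_cases i <;> fin_cases j <;>
          simp [toMatH, toR, d1, dm1, ds, dms, c0] <;> ring_nf <;> norm_num⟩
  · have e10 := congrFun hA1 0
    have e11 := congrFun hA1 1
    have e12 := congrFun hA1 2
    have e30 := congrFun hA3 0
    have e31 := congrFun hA3 1
    have e32 := congrFun hA3 2
    simp [Matrix.mulVec, dotProduct, Fin.sum_univ_three, toE, toR, p1c, p3c, opp,
      qneg, cs, cms, c0, ct, cmt, c1, cm1] at e10 e11 e12 e30 e31 e32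
    have h02 : A 0 2 = 0 := zero_of_mul_pos one_add_sqrt2_pos (by linarith)
    have h02s : A 0 2 * Real.sqrt 2 = 0 := by rw [h02]; ring
    have h12 : A 1 2 = 0 := zero_of_mul_pos one_add_sqrt2_pos (by linarith)
    have h12s : A 1 2 * Real.sqrt 2 = 0 := by rw [h12]; ring
    have h22 : A 2 2 = -1 := by
      have h := zero_of_mul_pos one_add_sqrt2_pos
        (show (A 2 2 + 1) * (1 + Real.sqrt 2) = 0 by linarith)
      linarith
    have h22s : A 2 2 * Real.sqrt 2 = -Real.sqrt 2 := by rw [h22]; ring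
    have h20 : A 2 0 = 0 := zero_of_mul_pos sqrt2_pos (by linarith)
    have h00 : A 0 0 = Real.sqrt 2 / 2 := cancel_s (by linarith [half_sqrt2])
    have h10 : A 1 0 = -(Real.sqrt 2 / 2) := cancel_s (by linarith [half_sqrt2])
    rcases master hAtA hAAt h00 h10 h20 h02 h12 h22 (by nlinarith [sqrt2_sq] : (Real.sqrt 2 / 2)^2 + (-(Real.sqrt 2 / 2))^2 = 1) (by norm_num : ((-1:ℝ))^2 = 1) with hA | hA
    · exact ⟨((ds,ds,c0),(dms,ds,c0),(c0,c0,dm1)), by decide, by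
        rw [hA]; funext i j; fin_cases i <;> fin_cases j <;>
          simp [toMatH, toR, d1, dm1, ds, dms, c0] <;> ring_nf <;> norm_num⟩
    · exact ⟨((ds,dms,c0),(dms,dms,c0),(c0,c0,dm1)), by decide, by
        rw [hA]; funext i j; fin_cases i <;> fin_cases j <;>
          simp [toMatH, toR, d1, dm1, ds, dms, c0] <;> ring_nf <;> norm_num⟩
  · have e10 := congrFun hA1 0
    have e11 := congrFun hA1 1
    have e12 := congrFun hA1 2
    have e30 := congrFun hA3 0
    have e31 := congrFun hA3 1
    have e32 := congrFun hA3 2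
    simp [Matrix.mulVec, dotProduct, Fin.sum_univ_three, toE, toR, p1c, p3c, opp,
      qneg, cs, cms, c0, ct, cmt, c1, cm1] at e10 e11 e12 e30 e31 e32
    have h02 : A 0 2 = 0 := zero_of_mul_pos one_add_sqrt2_pos (by linarith)
    have h02s : A 0 2 * Real.sqrt 2 = 0 := by rw [h02]; ring
    have h12 : A 1 2 = 0 := zero_of_mul_pos one_add_sqrt2_pos (by linarith)
    have h12s : A 1 2 * Real.sqrt 2 = 0 := by rw [h12]; ring
    have h22 : A 2 2 = -1 := by
      have h := zero_of_mul_pos one_add_sqrt2_pos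
        (show (A 2 2 + 1) * (1 + Real.sqrt 2) = 0 by linarith)
      linarith
    have h22s : A 2 2 * Real.sqrt 2 = -Real.sqrt 2 := by rw [h22]; ring
    have h20 : A 2 0 = 0 := zero_of_mul_pos sqrt2_pos (by linarith)
    have h00 : A 0 0 = -(Real.sqrt 2 / 2) := cancel_s (by linarith [half_sqrt2])
    have h10 : A 1 0 = Real.sqrt 2 / 2 := cancel_s (by linarith [half_sqrt2])
    rcases master hAtA hAAt h00 h10 h20 h02 h12 h22 (by nlinarith [sqrt2_sq] : (-(Real.sqrt 2 / 2))^2 + (Real.sqrt 2 / 2)^2 = 1) (by norm_num : ((-1:ℝ))^2 = 1) with hA | hA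
    · exact ⟨((dms,dms,c0),(ds,dms,c0),(c0,c0,dm1)), by decide, by
        rw [hA]; funext i j; fin_cases i <;> fin_cases j <;>
          simp [toMatH, toR, d1, dm1, ds, dms, c0] <;> ring_nf <;> norm_num⟩
    · exact ⟨((dms,ds,c0),(ds,ds,c0),(c0,c0,dm1)), by decide, by
        rw [hA]; funext i j; fin_cases i <;> fin_cases j <;>
          simp [toMatH, toR, d1, dm1, ds, dms, c0] <;> ring_nf <;> norm_num⟩
  · have e10 := congrFun hA1 0
    have e11 := congrFun hA1 1
    have e12 := congrFun hA1 2
    have e30 := congrFun hA3 0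
    have e31 := congrFun hA3 1
    have e32 := congrFun hA3 2
    simp [Matrix.mulVec, dotProduct, Fin.sum_univ_three, toE, toR, p1c, p3c, opp,
      qneg, cs, cms, c0, ct, cmt, c1, cm1] at e10 e11 e12 e30 e31 e32
    have h02 : A 0 2 = 0 := zero_of_mul_pos one_add_sqrt2_pos (by linarith)
    have h02s : A 0 2 * Real.sqrt 2 = 0 := by rw [h02]; ring
    have h12 : A 1 2 = 0 := zero_of_mul_pos one_add_sqrt2_pos (by linarith)
    have h12s : A 1 2 * Real.sqrt 2 = 0 := by rw [h12]; ring
    have h22 : A 2 2 = -1 := by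
      have h := zero_of_mul_pos one_add_sqrt2_pos
        (show (A 2 2 + 1) * (1 + Real.sqrt 2) = 0 by linarith)
      linarith
    have h22s : A 2 2 * Real.sqrt 2 = -Real.sqrt 2 := by rw [h22]; ring
    have h20 : A 2 0 = 0 := zero_of_mul_pos sqrt2_pos (by linarith)
    have h00 : A 0 0 = -(Real.sqrt 2 / 2) := cancel_s (by linarith [half_sqrt2])
    have h10 : A 1 0 = -(Real.sqrt 2 / 2) := cancel_s (by linarith [half_sqrt2])
    rcases master hAtA hAAt h00 h10 h20 h02 h12 h22 (by nlinarith [sqrt2_sq] : (-(Real.sqrt 2 / 2))^2 + (-(Real.sqrt 2 / 2))^2 = 1) (by norm_num : ((-1:ℝ))^2 = 1) with hA | hA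
    · exact ⟨((dms,ds,c0),(dms,dms,c0),(c0,c0,dm1)), by decide, by
        rw [hA]; funext i j; fin_cases i <;> fin_cases j <;>
          simp [toMatH, toR, d1, dm1, ds, dms, c0] <;> ring_nf <;> norm_num⟩
    · exact ⟨((dms,dms,c0),(dms,ds,c0),(c0,c0,dm1)), by decide, by
        rw [hA]; funext i j; fin_cases i <;> fin_cases j <;>
          simp [toMatH, toR, d1, dm1, ds, dms, c0] <;> ring_nf <;> norm_num⟩

lemma upperB (A : Matrix (Fin 3) (Fin 3) ℝ) (hO : A ∈ Matrix.orthogonalGroup (Fin 3) ℝ)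
    (him : act A '' V' = V') : A ∈ toMatH '' {m | m ∈ E16} := by
  have hAAt : A * Aᵀ = 1 := by
    exact (Matrix.mem_orthogonalGroup_iff _ _).mp hO
  have hAtA : Aᵀ * A = 1 := by
    exact (Matrix.mem_orthogonalGroup_iff' _ _).mp hO
  have himL : ∀ p ∈ L24, ∃ q ∈ L24, A.mulVec (toE p) = toE q := by
    intro p hp
    have h1 : toE p ∈ V' := by rw [V'_eq]; exact ⟨p, hp, rfl⟩
    have h2 : act A (toE p) ∈ V' := him ▸ Set.mem_image_of_mem _ h1
    rw [V'_eq] at h2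
    obtain ⟨q, hq, hqe⟩ := h2
    exact ⟨q, hq, congrArg WithLp.ofLp hqe.symm⟩
  have himT : ∀ p ∈ L24, ∃ q ∈ L24, Aᵀ.mulVec (toE p) = toE q := by
    intro p hp
    have h1 : toE p ∈ V' := by rw [V'_eq]; exact ⟨p, hp, rfl⟩
    rw [← him] at h1
    obtain ⟨u, hu, hue⟩ := h1
    rw [V'_eq] at hu
    obtain ⟨q, hq, rfl⟩ := hu
    refine ⟨q, hq, ?_⟩
    rw [← hue]
    show Aᵀ.mulVec (A.mulVec (toE q)) = toE q
    rw [Matrix.mulVec_mulVec, hAtA, Matrix.one_mulVec]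
  have hcup : ∀ p q : P3, vneg p ∉ L24 → A.mulVec (toE p) = toE q → q ∈ L24 → q ∈ Cup8 := by
    intro p q hnp hA1 hq
    rcases cup_or q hq with h | h
    · exact h
    · exfalso
      obtain ⟨r, hr, hre⟩ := himT (vneg q) h
      apply hnp
      have h1 : Aᵀ.mulVec (toE q) = toE p := by
        rw [← hA1, Matrix.mulVec_mulVec, hAtA, Matrix.one_mulVec]
      have h2 : toE r = toE (vneg p) := by
        rw [toE_vneg] at hre ⊢
        rw [WithLp.ofLp_neg, Matrix.mulVec_neg, h1] at hre
        ext i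
        simpa using (congrFun hre i).symm
      rwa [← toE_inj h2]
  obtain ⟨q1, hq1, hA1⟩ := himL p1c (by decide)
  obtain ⟨q3, hq3, hA3⟩ := himL p3c (by decide)
  have hq1c := hcup p1c q1 (by decide) hA1 hq1
  have hq3c := hcup p3c q3 (by decide) hA3 hq3
  have hdot : qdot q1 q3 = qdot p1c p3c := by
    apply toR_inj
    rw [← toE_dot, ← toE_dot, ← hA1, ← hA3]
    exact dot_pres hAtA (toE p1c) (toE p3c)
  simp only [Cup8, List.mem_cons, List.not_mem_nil, or_false] at hq1c hq3c
  rcases hq1c with rfl|rfl|rfl|rfl|rfl|rfl|rfl|rfl <;>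
    rcases hq3c with rfl|rfl|rfl|rfl|rfl|rfl|rfl|rfl <;>
      first
        | exact absurd hdot (by decide)
        | exact finalPos hAtA hAAt _ _ (by decide) (by decide) hA1 hA3
        | exact finalNeg hAtA hAAt _ _ (by decide) (by decide) hA1 hA3


/-- The full symmetry group of the pseudo-rhombicuboctahedron has order 16:
there are exactly 16 matrices `A` in O(3) with `A(V') = V'`. -/
theorem pseudoRhombicuboctahedron_full_symmetry_group_card :
    {A : Matrix (Fin 3) (Fin 3) ℝ | A ∈ Matrix.orthogonalGroup (Fin 3) ℝ ∧
      act A '' V' = V'}.ncard = 16 := by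
  have hset : {A : Matrix (Fin 3) (Fin 3) ℝ | A ∈ Matrix.orthogonalGroup (Fin 3) ℝ ∧
      act A '' V' = V'} = toMatH '' {m | m ∈ E16} := by
    ext A
    constructor
    · rintro ⟨h1, h2⟩
      exact upperB A h1 h2
    · rintro ⟨m, hm, rfl⟩
      exact partA m hm
  rw [hset, Set.ncard_image_of_injective _ toMatH_inj]
  rw [show {m : M3 | m ∈ E16} = ↑E16.toFinset by simp [List.coe_toFinset]]
  rw [Set.ncard_coe_finset, List.toFinset_card_of_nodup e16_nodup]
  rfl
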